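/- Let G be a network with request R and extended graph G_ext. Let x : S → {0,1} and f : E_ext → ℕ satisfy (IP-1) f(δ⁺_{E_ext}(v)) = f(δ⁻_{E_ext}(v)) for all v ∈ V_G, (IP-2) f(δ⁺_{E_R}(W)) ≥ x_s for all W ⊆ V_G and s ∈ W∩S, and (IP-5) f(s,o⁻_S) ≤ u_S(s)·x_s for all s ∈ S. Then for every node t ∈ S∪T with f(o⁺,t) ≥ 1 there exists a directed path ⟨o⁺, t, …, o⁻_r⟩ in the support graph G^f_ext, i.e., a path starting with the edge (o⁺,t) and ending at the super sink o⁻_r all of whose edges carry positive flow. -/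

import Mathlib

/-! Formalization of the Constrained Virtual Steiner Arborescence Problem (CVSAP),
its single-commodity flow IP formulation, and related notions. -/

/-- Vertices of the extended graph: original vertices plus super source `src`,
super sink `sinkS` for Steiner nodes and super sink `sinkR` for the root. -/
inductive ExtV (V : Type) where
  | orig : V → ExtV V
  | src : ExtV V
  | sinkS : ExtV V
  | sinkR : ExtV V
deriving DecidableEq

open ExtV

/-- A (finite) capacitated directed network. -/
structure Network (V : Type) [DecidableEq V] where
  E : Finset (V × V)
  uE : V × V → ℕ
  cE : V × V → ℝ

/-- A request `R = (root, S, T, u_r, c_S, u_S)`. -/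
structure Request (V : Type) [DecidableEq V] where
  root : V
  S : Finset V
  T : Finset V
  ur : ℕ
  cS : V → ℝ
  uS : V → ℕ

variable {V : Type} [DecidableEq V]

/-- Well-formedness: root is neither terminal nor Steiner site, Steiner sites and terminals
are disjoint, and all costs are positive. -/
def RequestWF (N : Network V) (R : Request V) : Prop :=
  R.root ∉ R.T ∧ R.root ∉ R.S ∧ Disjoint R.S R.T ∧
    (∀ s ∈ R.S, 0 < R.cS s) ∧ (∀ e ∈ N.E, 0 < N.cE e)

/-- Edge set of the extended graph `G_ext`. -/
def Eext (N : Network V) (R : Request V) : Finset (ExtV V × ExtV V) :=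
  (N.E.image fun e => (orig e.1, orig e.2)) ∪
    ({(orig R.root, sinkR)} : Finset (ExtV V × ExtV V)) ∪
    (R.S.image fun s => (orig s, sinkS)) ∪
    (R.S.image fun s => (src, orig s)) ∪
    (R.T.image fun t => (src, orig t))

/-- `E_R`: the extended edges without the edges into the Steiner super sink. -/
def ERext (N : Network V) (R : Request V) : Finset (ExtV V × ExtV V) :=
  (Eext N R).filter fun e => e.2 ≠ sinkS

/-- Edges of `F` leaving node `v`. -/
def outV (F : Finset (ExtV V × ExtV V)) (v : ExtV V) : Finset (ExtV V × ExtV V) :=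
  F.filter fun e => e.1 = v

/-- Edges of `F` entering node `v`. -/
def inV (F : Finset (ExtV V × ExtV V)) (v : ExtV V) : Finset (ExtV V × ExtV V) :=
  F.filter fun e => e.2 = v

/-- Edges of `F` leaving the node set `W`. -/
def outSet (F : Finset (ExtV V × ExtV V)) (W : Finset (ExtV V)) : Finset (ExtV V × ExtV V) :=
  F.filter fun e => e.1 ∈ W ∧ e.2 ∉ W

/-- Total flow of `f` on the edge set `F`. -/
def fSum (f : ExtV V × ExtV V → ℕ) (F : Finset (ExtV V × ExtV V)) : ℕ :=
  ∑ e ∈ F, f e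

/-- Embedding of a set of original nodes into the extended graph. -/
def extW (W : Finset V) : Finset (ExtV V) := W.image orig

/-- A walk in the support graph `G^f_ext`: consecutive nodes are joined by extended
edges carrying positive flow. -/
def IsSupportWalk (N : Network V) (R : Request V) (f : ExtV V × ExtV V → ℕ)
    (p : List (ExtV V)) : Prop :=
  p.Chain' fun a b => (a, b) ∈ Eext N R ∧ 1 ≤ f (a, b)

/-- (IP-1): flow conservation at all original nodes. -/
def IP1 (N : Network V) (R : Request V) (f : ExtV V × ExtV V → ℕ) : Prop :=
  ∀ v : V, fSum f (outV (Eext N R) (orig v)) = fSum f (inV (Eext N R) (orig v))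

/-- (IP-2): connectivity inequalities for activated Steiner sites. -/
def IP2 (N : Network V) (R : Request V) (x : V → ℕ) (f : ExtV V × ExtV V → ℕ) : Prop :=
  ∀ W : Finset V, ∀ s ∈ W, s ∈ R.S → x s ≤ fSum f (outSet (ERext N R) (extW W))

/-- (IP-3): directed Steiner cuts for terminals. -/
def IP3 (N : Network V) (R : Request V) (f : ExtV V × ExtV V → ℕ) : Prop :=
  ∀ W : Finset V, (W ∩ R.T).Nonempty → 1 ≤ fSum f (outSet (ERext N R) (extW W))

/-- Feasibility for the integer program IP-A-CVSAP. -/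
def IPFeasible (N : Network V) (R : Request V) (x : V → ℕ) (f : ExtV V × ExtV V → ℕ) : Prop :=
  (∀ s ∈ R.S, x s ≤ 1) ∧
  IP1 N R f ∧
  IP2 N R x f ∧
  IP3 N R f ∧
  (∀ s ∈ R.S, x s ≤ f (orig s, sinkS)) ∧
  (∀ s ∈ R.S, f (orig s, sinkS) ≤ R.uS s * x s) ∧
  f (orig R.root, sinkR) ≤ R.ur ∧
  (∀ e ∈ N.E, f (orig e.1, orig e.2) ≤ N.uE e) ∧
  (∀ t ∈ R.T, f (src, orig t) = 1) ∧
  (∀ s ∈ R.S, f (src, orig s) = x s)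

/-- Objective value of IP-A-CVSAP. -/
noncomputable def costIP (N : Network V) (R : Request V) (x : V → ℕ)
    (f : ExtV V × ExtV V → ℕ) : ℝ :=
  ∑ e ∈ N.E, N.cE e * f (orig e.1, orig e.2) + ∑ s ∈ R.S, R.cS s * x s

/-- A Virtual Arborescence: nodes, virtual edges and the mapping of virtual edges
onto paths in the underlying graph. -/
structure VirtArb (V : Type) where
  VT : Finset V
  ET : Finset (V × V)
  pi : V × V → List V

/-- `p` is a simple directed path in `N` from `u` to `v`. -/
def IsPathInG (N : Network V) (p : List V) (u v : V) : Prop :=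
  p.Chain' (fun a b => (a, b) ∈ N.E) ∧ p.head? = some u ∧ p.getLast? = some v ∧ p.Nodup

/-- The virtual edges whose path uses the edge `e` of the underlying graph. -/
def pathUses (TA : VirtArb V) (e : V × V) : Finset (V × V) :=
  TA.ET.filter fun d => e ∈ (TA.pi d).zip (TA.pi d).tail

/-- `|π(E_T)[e]|`: the number of paths of the virtual arborescence using edge `e`. -/
def pathCount (TA : VirtArb V) (e : V × V) : ℕ := (pathUses TA e).card

/-- Total degree of node `v` with respect to the virtual edge set `ET`. -/
def degTotal (ET : Finset (V × V)) (v : V) : ℕ :=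
  (ET.filter fun e => e.1 = v).card + (ET.filter fun e => e.2 = v).card

/-- `(VT, ET, r)` is an arborescence rooted at `r` with all edges oriented towards `r`. -/
def ArborTowards (VT : Finset V) (ET : Finset (V × V)) (r : V) : Prop :=
  (∀ e ∈ ET, e.1 ∈ VT ∧ e.2 ∈ VT ∧ e.1 ≠ e.2) ∧
  (∀ v ∈ VT, v ≠ r → (ET.filter fun e => e.1 = v).card = 1) ∧
  (∀ e ∈ ET, e.1 ≠ r) ∧
  (∀ v ∈ VT, ∃ p : List V, p.Chain' (fun a b => (a, b) ∈ ET) ∧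
      p.head? = some v ∧ p.getLast? = some r)

/-- `(VT, ET, r)` is an arborescence rooted at `r` with all edges oriented away from `r`. -/
def ArborAway (VT : Finset V) (ET : Finset (V × V)) (r : V) : Prop :=
  (∀ e ∈ ET, e.1 ∈ VT ∧ e.2 ∈ VT ∧ e.1 ≠ e.2) ∧
  (∀ v ∈ VT, v ≠ r → (ET.filter fun e => e.2 = v).card = 1) ∧
  (∀ e ∈ ET, e.2 ≠ r) ∧
  (∀ v ∈ VT, ∃ p : List V, p.Chain' (fun a b => (a, b) ∈ ET) ∧
      p.head? = some r ∧ p.getLast? = some v)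

/-- Feasible solutions of A-CVSAP: all arborescence edges oriented towards the root. -/
def FeasibleACVSAP (N : Network V) (R : Request V) (TA : VirtArb V) : Prop :=
  R.root ∈ TA.VT ∧
  ArborTowards TA.VT TA.ET R.root ∧
  (∀ d ∈ TA.ET, IsPathInG N (TA.pi d) d.1 d.2) ∧
  R.T ⊆ TA.VT ∧
  TA.VT ⊆ insert R.root (R.S ∪ R.T) ∧
  (∀ t ∈ R.T, degTotal TA.ET t = 1) ∧
  degTotal TA.ET R.root ≤ R.ur ∧
  (∀ s ∈ R.S, s ∈ TA.VT → degTotal TA.ET s ≤ R.uS s + 1) ∧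
  (∀ e ∈ N.E, pathCount TA e ≤ N.uE e)

/-- Feasible solutions of M-CVSAP: all arborescence edges oriented away from the root. -/
def FeasibleMCVSAP (N : Network V) (R : Request V) (TA : VirtArb V) : Prop :=
  R.root ∈ TA.VT ∧
  ArborAway TA.VT TA.ET R.root ∧
  (∀ d ∈ TA.ET, IsPathInG N (TA.pi d) d.1 d.2) ∧
  R.T ⊆ TA.VT ∧
  TA.VT ⊆ insert R.root (R.S ∪ R.T) ∧
  (∀ t ∈ R.T, degTotal TA.ET t = 1) ∧
  degTotal TA.ET R.root ≤ R.ur ∧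
  (∀ s ∈ R.S, s ∈ TA.VT → degTotal TA.ET s ≤ R.uS s + 1) ∧
  (∀ e ∈ N.E, pathCount TA e ≤ N.uE e)

/-- Cost of a virtual arborescence. -/
noncomputable def costCVSAP (N : Network V) (R : Request V) (TA : VirtArb V) : ℝ :=
  ∑ e ∈ N.E, N.cE e * pathCount TA e + ∑ s ∈ R.S.filter (· ∈ TA.VT), R.cS s


lemma mem_Eext_cases {N : Network V} {R : Request V} {e : ExtV V × ExtV V} (h : e ∈ Eext N R) :
    (∃ a b, (a, b) ∈ N.E ∧ e = (orig a, orig b)) ∨ e = (orig R.root, sinkR) ∨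
      (∃ s ∈ R.S, e = (orig s, sinkS)) ∨ (∃ s, (s ∈ R.S ∨ s ∈ R.T) ∧ e = (src, orig s)) := by
  simp only [Eext, Finset.mem_union, Finset.mem_image, Finset.mem_singleton] at h
  rcases h with ((((⟨a, ha, he⟩ | he) | ⟨s, hs, he⟩) | ⟨s, hs, he⟩) | ⟨s, hs, he⟩)
  · exact Or.inl ⟨a.1, a.2, ha, he.symm⟩
  · exact Or.inr (Or.inl he)
  · exact Or.inr (Or.inr (Or.inl ⟨s, hs, he.symm⟩))
  · exact Or.inr (Or.inr (Or.inr ⟨s, Or.inl hs, he.symm⟩))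
  · exact Or.inr (Or.inr (Or.inr ⟨s, Or.inr hs, he.symm⟩))

lemma sum_fiber_fst (f : ExtV V × ExtV V → ℕ) (E : Finset (ExtV V × ExtV V)) (W : Finset V) :
    ∑ v ∈ W, fSum f (E.filter fun e => e.1 = orig v) =
      fSum f (E.filter fun e => e.1 ∈ extW W) := by
  classical
  unfold fSum
  rw [← Finset.sum_biUnion]
  · congr 1
    ext e
    simp only [Finset.mem_biUnion, Finset.mem_filter, extW, Finset.mem_image]
    constructor
    · rintro ⟨v, hv, he, h1⟩; exact ⟨he, v, hv, h1.symm⟩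
    · rintro ⟨he, v, hv, h1⟩; exact ⟨v, hv, he, h1.symm⟩
  · intro a _ b _ hab
    simp only [Function.onFun, Finset.disjoint_left, Finset.mem_filter]
    rintro e ⟨_, h1⟩ ⟨_, h2⟩
    exact hab (by injection h1 ▸ h2)

lemma sum_fiber_snd (f : ExtV V × ExtV V → ℕ) (E : Finset (ExtV V × ExtV V)) (W : Finset V) :
    ∑ v ∈ W, fSum f (E.filter fun e => e.2 = orig v) =
      fSum f (E.filter fun e => e.2 ∈ extW W) := by
  classical
  unfold fSum
  rw [← Finset.sum_biUnion]
  · congr 1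
    ext e
    simp only [Finset.mem_biUnion, Finset.mem_filter, extW, Finset.mem_image]
    constructor
    · rintro ⟨v, hv, he, h1⟩; exact ⟨he, v, hv, h1.symm⟩
    · rintro ⟨he, v, hv, h1⟩; exact ⟨v, hv, he, h1.symm⟩
  · intro a _ b _ hab
    simp only [Function.onFun, Finset.disjoint_left, Finset.mem_filter]
    rintro e ⟨_, h1⟩ ⟨_, h2⟩
    exact hab (by injection h1 ▸ h2)

lemma exists_nodup_chain_aux {α : Type*} {r : α → α → Prop} {u v : α}
    (h : Relation.ReflTransGen r u v) :
    ∃ p : List α, (u :: p).Chain' r ∧ (u :: p).getLast? = some v ∧ (u :: p).Nodup := by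
  classical
  induction h using Relation.ReflTransGen.head_induction_on with
  | refl => exact ⟨[], List.isChain_singleton _, by simp, by simp⟩
  | head hab hbv ih =>
    rename_i a b
    obtain ⟨p, hc, hl, hn⟩ := ih
    by_cases ha : a ∈ b :: p
    · obtain ⟨l1, l2, hsplit⟩ := List.append_of_mem ha
      refine ⟨l2, ?_, ?_, ?_⟩
      · exact hc.suffix ⟨l1, hsplit.symm⟩
      · rw [hsplit, List.getLast?_append] at hl
        rwa [show ((a :: l2).getLast?.or l1.getLast? = (a :: l2).getLast?) from
          Option.or_of_isSome (by simp [List.getLast?_isSome])] at hl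
      · exact List.Nodup.sublist (hsplit ▸ (List.sublist_append_right l1 (a :: l2))) hn
    · exact ⟨b :: p, List.isChain_cons_cons.2 ⟨hab, hc⟩, by rw [List.getLast?_cons_cons]; exact hl,
        by simp [ha, hn]⟩

lemma chain'_tail_has_pred {α : Type*} {r : α → α → Prop} :
    ∀ {h : α} {l : List α}, (h :: l).Chain' r → ∀ a ∈ l, ∃ b, r b a := by
  intro h l
  induction l generalizing h with
  | nil => intro _ a ha; simp at ha
  | cons c l ih =>
    intro hc a ha
    replace hc := List.isChain_cons_cons.1 hc
    rcases List.mem_cons.1 ha with rfl | ha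
    · exact ⟨h, hc.1⟩
    · exact ih hc.2 a ha

/-! ### Statement 2: existence of a flow-carrying path `⟨o⁺, t, …, o⁻_r⟩`. -/

theorem exists_path_to_root_sink [Fintype V] (N : Network V) (R : Request V)
    (hWF : RequestWF N R) (x : V → ℕ) (f : ExtV V × ExtV V → ℕ)
    (hf0 : ∀ e ∉ Eext N R, f e = 0)
    (h1 : IP1 N R f) (h2 : IP2 N R x f)
    (h5 : ∀ s ∈ R.S, f (ExtV.orig s, ExtV.sinkS) ≤ R.uS s * x s)
    (t : V) (ht : t ∈ R.S ∪ R.T) (hft : 1 ≤ f (ExtV.src, ExtV.orig t)) :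
    ∃ p : List (ExtV V),
      IsSupportWalk N R f (ExtV.src :: ExtV.orig t :: p) ∧
      (ExtV.src :: ExtV.orig t :: p).getLast? = some ExtV.sinkR ∧
      (ExtV.src :: ExtV.orig t :: p).Nodup := by
  classical
  set step : ExtV V → ExtV V → Prop := fun a b => (a, b) ∈ Eext N R ∧ 1 ≤ f (a, b) with hstep
  -- (src, orig t) is an extended edge
  have hsrc_t : (src, orig t) ∈ Eext N R := by
    simp only [Eext, Finset.mem_union, Finset.mem_image, Finset.mem_singleton]
    rcases Finset.mem_union.1 ht with h | h
    · exact Or.inl (Or.inr ⟨t, h, rfl⟩)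
    · exact Or.inr ⟨t, h, rfl⟩
  -- Key claim: sinkR is reachable from orig t in the support graph
  have key : Relation.ReflTransGen step (orig t) sinkR := by
    by_contra hnr
    set W : Finset V := Finset.univ.filter fun v => Relation.ReflTransGen step (orig t) (orig v)
      with hW
    have htW : t ∈ W := by simp only [hW, Finset.mem_filter, Finset.mem_univ, true_and]; exact .refl
    have hmemW : ∀ v : V, v ∈ W ↔ Relation.ReflTransGen step (orig t) (orig v) := by
      intro v; simp [hW]
    have hreach : ∀ e ∈ Eext N R, e.1 ∈ extW W → 1 ≤ f e →
        Relation.ReflTransGen step (orig t) e.2 := by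
      intro e he h1' hf'
      obtain ⟨v, hvW, hv⟩ := Finset.mem_image.1 h1'
      have hrv : Relation.ReflTransGen step (orig t) (orig v) := (hmemW v).1 hvW
      refine hrv.tail ?_
      rw [hv]
      exact ⟨by rwa [Prod.mk.eta], by rwa [Prod.mk.eta]⟩
    have hcross_zero : ∀ e ∈ Eext N R, e.1 ∈ extW W → e.2 ∉ extW W → e.2 ≠ sinkS → f e = 0 := by
      intro e he hin hout hsS
      by_contra hne
      have hf' : 1 ≤ f e := Nat.one_le_iff_ne_zero.2 hne
      have hr := hreach e he hin hf'
      rcases mem_Eext_cases he with ⟨a, b, _, rfl⟩ | rfl | ⟨s, hs, rfl⟩ | ⟨s, _, rfl⟩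
      · exact hout (Finset.mem_image.2 ⟨b, (hmemW b).2 hr, rfl⟩)
      · exact hnr hr
      · exact hsS rfl
      · exact hout (Finset.mem_image.2 ⟨s, (hmemW s).2 hr, rfl⟩)
    have hERzero : fSum f (outSet (ERext N R) (extW W)) = 0 := by
      refine Finset.sum_eq_zero ?_
      intro e he
      simp only [outSet, ERext, Finset.mem_filter] at he
      exact hcross_zero e he.1.1 he.2.1 he.2.2 he.1.2
    have hx0 : ∀ s ∈ W, s ∈ R.S → x s = 0 := by
      intro s hsW hsS
      have := h2 W s hsW hsS
      omega
    have hAllCross0 : ∀ e ∈ Eext N R, e.1 ∈ extW W → e.2 ∉ extW W → f e = 0 := by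
      intro e he hin hout
      by_cases hsS : e.2 = sinkS
      · rcases mem_Eext_cases he with ⟨a, b, _, rfl⟩ | rfl | ⟨s, hs, rfl⟩ | ⟨s, _, rfl⟩
        · simp at hsS
        · simp at hsS
        · obtain ⟨v, hvW, hv⟩ := Finset.mem_image.1 hin
          have hv' : v = s := by injection hv
          subst hv'
          have h5' := h5 v hs
          rw [hx0 v hvW hs] at h5'
          omega
        · simp at hsS
      · exact hcross_zero e he hin hout hsS
    -- flow conservation summed over W
    have hcons : fSum f ((Eext N R).filter fun e => e.1 ∈ extW W) =
        fSum f ((Eext N R).filter fun e => e.2 ∈ extW W) := by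
      rw [← sum_fiber_fst, ← sum_fiber_snd]
      exact Finset.sum_congr rfl fun v _ => h1 v
    -- split both sides by whether the other endpoint is in W
    have hsplit1 : fSum f ((Eext N R).filter fun e => e.1 ∈ extW W) =
        fSum f (((Eext N R).filter fun e => e.1 ∈ extW W).filter fun e => e.2 ∈ extW W) := by
      unfold fSum
      rw [← Finset.sum_filter_add_sum_filter_not ((Eext N R).filter fun e => e.1 ∈ extW W)
        (fun e => e.2 ∈ extW W) f]
      have : ∑ e ∈ ((Eext N R).filter fun e => e.1 ∈ extW W).filter
          (fun e => ¬ e.2 ∈ extW W), f e = 0 := by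
        refine Finset.sum_eq_zero ?_
        intro e he
        simp only [Finset.mem_filter] at he
        exact hAllCross0 e he.1.1 he.1.2 he.2
      omega
    have hsplit2 : fSum f (((Eext N R).filter fun e => e.2 ∈ extW W).filter
          fun e => e.1 ∈ extW W) + f (src, orig t) ≤
        fSum f ((Eext N R).filter fun e => e.2 ∈ extW W) := by
      unfold fSum
      rw [← Finset.sum_filter_add_sum_filter_not ((Eext N R).filter fun e => e.2 ∈ extW W)
        (fun e => e.1 ∈ extW W) f]
      have hmem : (src, orig t) ∈ ((Eext N R).filter fun e => e.2 ∈ extW W).filter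
          (fun e => ¬ e.1 ∈ extW W) := by
        simp only [Finset.mem_filter]
        refine ⟨⟨hsrc_t, Finset.mem_image.2 ⟨t, htW, rfl⟩⟩, ?_⟩
        simp [extW]
      have := Finset.single_le_sum (f := f) (fun e _ => Nat.zero_le _) hmem
      omega
    have hcomm : ((Eext N R).filter fun e => e.1 ∈ extW W).filter (fun e => e.2 ∈ extW W) =
        ((Eext N R).filter fun e => e.2 ∈ extW W).filter (fun e => e.1 ∈ extW W) := by
      rw [Finset.filter_filter, Finset.filter_filter]
      exact Finset.filter_congr fun e _ => and_comm
    rw [hsplit1, hcomm] at hcons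
    omega
  -- extract a nodup chain
  obtain ⟨p, hc, hl, hn⟩ := exists_nodup_chain_aux key
  have hsrc_not : src ∉ orig t :: p := by
    intro hmem
    rcases List.mem_cons.1 hmem with h | h
    · exact absurd h (by simp)
    · obtain ⟨b, hb⟩ := chain'_tail_has_pred hc src h
      rcases mem_Eext_cases hb.1 with ⟨a, c, _, he⟩ | he | ⟨s, _, he⟩ | ⟨s, _, he⟩ <;>
        simp at he
  refine ⟨p, ?_, ?_, ?_⟩
  · exact List.isChain_cons_cons.2 ⟨⟨hsrc_t, hft⟩, hc⟩
  · rw [List.getLast?_cons_cons]; exact hl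
  · exact List.nodup_cons.2 ⟨hsrc_not, hn⟩
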